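/- arXiv:1604.05510 — 2 statements merged into one kernel-verified Lean document; each statement's English description precedes it below -/
import Mathlib

section
/- Let T be a rooted directed tree with root r, and let T' be the rooted directed tree obtained from T by adding a new vertex r' and the directed edge (r, r'), with r' as the new root. Then for every positive integer k, vrev(T) ≤ k if and only if rev(T') ≤ k + 1. -/
/-- A system for pebbling: a finite directed tree given by a root and a parent
function (edges are directed from each non-root vertex to its parent, i.e.
toward the root). -/
structure PebSys (V : Type) where
  root : V
  parent : V → V

/-- `T` is a genuine rooted directed tree: the root is a fixed point of the
parent map and every vertex reaches the root by iterating the parent map. -/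
def IsRDTree {V : Type} [Fintype V] (T : PebSys V) : Prop :=
  T.parent T.root = T.root ∧ ∀ v : V, ∃ k : ℕ, T.parent^[k] v = T.root

/-- One legal move of the reversible pebble game, from configuration `P` to
configuration `Q`: exactly one vertex `v` is pebbled or unpebbled, and all
in-neighbours of `v` (vertices `u ≠ v` with `parent u = v`) carry pebbles
in `P`. -/
def PebStep {V : Type} [DecidableEq V] (T : PebSys V) (P Q : Finset V) : Prop :=
  ∃ v : V, ((v ∉ P ∧ Q = insert v P) ∨ (v ∉ Q ∧ P = insert v Q)) ∧
    ∀ u : V, u ≠ v → T.parent u = v → u ∈ P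

/-- A persistent reversible pebbling: starts with no pebbles, ends with a
pebble exactly on the root, consecutive configurations are legal moves. -/
def IsPebbling {V : Type} [DecidableEq V] (T : PebSys V) (L : List (Finset V)) : Prop :=
  L.head? = some ∅ ∧ L.getLast? = some {T.root} ∧ L.Chain' (PebStep T)

/-- A visiting reversible pebbling: starts and ends with no pebbles, and the
root carries a pebble at some point. -/
def IsVisPebbling {V : Type} [DecidableEq V] (T : PebSys V) (L : List (Finset V)) : Prop :=
  L.head? = some ∅ ∧ L.getLast? = some ∅ ∧ (∃ P ∈ L, T.root ∈ P) ∧ L.Chain' (PebStep T)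

/-- The space of a pebbling: the maximum number of pebbles in any configuration. -/
def pebSpace {V : Type} (L : List (Finset V)) : ℕ := (L.map Finset.card).foldr max 0

/-- The persistent reversible pebbling number `rev`. -/
noncomputable def revNum {V : Type} [DecidableEq V] (T : PebSys V) : ℕ :=
  sInf {k | ∃ L : List (Finset V), IsPebbling T L ∧ pebSpace L ≤ k}

/-- The visiting reversible pebbling number `vrev`. -/
noncomputable def vrevNum {V : Type} [DecidableEq V] (T : PebSys V) : ℕ :=
  sInf {k | ∃ L : List (Finset V), IsVisPebbling T L ∧ pebSpace L ≤ k}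

lemma pebSpace_le_iff {V : Type} {L : List (Finset V)} {k : ℕ} :
    pebSpace L ≤ k ↔ ∀ Q ∈ L, Q.card ≤ k := by
  induction L with
  | nil => simp [pebSpace]
  | cons a l ih =>
    simp only [pebSpace, List.map_cons, List.foldr_cons, max_le_iff, List.mem_cons] at *
    constructor
    · rintro ⟨h1, h2⟩ Q (rfl | hQ)
      · exact h1
      · exact ih.mp h2 Q hQ
    · intro h
      exact ⟨h a (Or.inl rfl), ih.mpr fun Q hQ => h Q (Or.inr hQ)⟩

lemma PebStep.symm {V : Type} [DecidableEq V] {T : PebSys V} {P Q : Finset V}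
    (h : PebStep T P Q) : PebStep T Q P := by
  obtain ⟨v, hv, hleg⟩ := h
  refine ⟨v, hv.symm, fun u hu hp => ?_⟩
  have := hleg u hu hp
  rcases hv with ⟨_, rfl⟩ | ⟨_, rfl⟩
  · exact Finset.mem_insert_of_mem this
  · exact Finset.mem_of_mem_insert_of_ne this hu

lemma chain'_peb_reverse {V : Type} [DecidableEq V] {T : PebSys V} {L : List (Finset V)}
    (h : L.Chain' (PebStep T)) : L.reverse.Chain' (PebStep T) := by
  unfold List.Chain' at *
  rw [List.isChain_reverse]
  exact h.imp fun a b hab => hab.symm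

/-- "Bounce" lemma: go along a legal chain and then retrace the steps backwards. -/
lemma bounce {V : Type} [DecidableEq V] (T : PebSys V) (X : List (Finset V)) (hX : X ≠ [])
    (hc : X.Chain' (PebStep T)) :
    ∃ M : List (Finset V), M.head? = X.head? ∧ M.getLast? = X.head? ∧
      M.Chain' (PebStep T) ∧ (∀ Q ∈ M, Q ∈ X) ∧ (∀ Q ∈ X, Q ∈ M) := by
  rcases List.eq_nil_or_concat X with rfl | ⟨Y, a, hXe⟩
  · exact absurd rfl hX
  rw [List.concat_eq_append] at hXe
  subst hXe
  refine ⟨(Y ++ [a]) ++ Y.reverse, ?_, ?_, ?_, ?_, ?_⟩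
  · exact List.head?_append_of_ne_nil _ hX
  · rcases eq_or_ne Y [] with rfl | hY
    · simp
    · rw [List.getLast?_append_of_ne_nil _ (by simpa using hY), List.getLast?_reverse,
        List.head?_append_of_ne_nil _ hY]
  · unfold List.Chain' at *
    rw [List.isChain_append]
    obtain ⟨hcY, -, hj⟩ := List.isChain_append.mp hc
    refine ⟨hc, chain'_peb_reverse hcY, fun x hx y hy => ?_⟩
    rw [List.getLast?_concat] at hx
    rw [List.head?_reverse] at hy
    have : PebStep T y a := hj y hy a rfl
    obtain rfl : a = x := by simpa using hx
    exact this.symm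
  · intro Q hQ
    rcases List.mem_append.mp hQ with h | h
    · exact h
    · exact List.mem_append_left _ (List.mem_reverse.mp h)
  · exact fun Q hQ => List.mem_append_left _ hQ

section Lift

variable {V : Type} [DecidableEq V] {T : PebSys V} {T' : PebSys (Option V)}

lemma step_lift
    (hnone : T'.parent none = none)
    (hparent : ∀ v : V, T'.parent (some v) = if v = T.root then none else some (T.parent v))
    {P Q : Finset V} (h : PebStep T P Q) (N : Finset (Option V)) (hN : ∀ x ∈ N, x = none) :
    PebStep T' (P.image some ∪ N) (Q.image some ∪ N) := by
  obtain ⟨v, hv, hleg⟩ := h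
  have hleg' : ∀ u : Option V, u ≠ some v → T'.parent u = some v → u ∈ P.image some ∪ N := by
    rintro (_ | w) hu hp
    · rw [hnone] at hp; exact absurd hp (by simp)
    · rw [hparent w] at hp
      by_cases hw : w = T.root
      · rw [if_pos hw] at hp; exact absurd hp (by simp)
      · rw [if_neg hw] at hp
        have hwv : T.parent w = v := by injection hp
        have : w ∈ P := hleg w (fun hh => hu (by rw [hh])) hwv
        exact Finset.mem_union_left _ (Finset.mem_image_of_mem _ this)
  have hnotN : some v ∉ N := fun hh => by simpa using hN _ hh
  refine ⟨some v, ?_, hleg'⟩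
  rcases hv with ⟨hv1, rfl⟩ | ⟨hv1, rfl⟩
  · refine Or.inl ⟨?_, ?_⟩
    · simp only [Finset.mem_union, not_or]
      exact ⟨by simpa using hv1, hnotN⟩
    · rw [Finset.image_insert, Finset.insert_union]
  · refine Or.inr ⟨?_, ?_⟩
    · simp only [Finset.mem_union, not_or]
      exact ⟨by simpa using hv1, hnotN⟩
    · rw [Finset.image_insert, Finset.insert_union]

lemma step_erase
    (hrootfix : T.parent T.root = T.root)
    (hparent : ∀ v : V, T'.parent (some v) = if v = T.root then none else some (T.parent v))
    {P Q : Finset (Option V)} (hP : none ∈ P) (hQ : none ∈ Q) (h : PebStep T' P Q) :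
    PebStep T (Finset.eraseNone P) (Finset.eraseNone Q) := by
  obtain ⟨v, hv, hleg⟩ := h
  obtain ⟨w, rfl⟩ : ∃ w : V, v = some w := by
    cases v with
    | none =>
      rcases hv with ⟨h1, _⟩ | ⟨h1, _⟩
      · exact absurd hP h1
      · exact absurd hQ h1
    | some w => exact ⟨w, rfl⟩
  have hleg' : ∀ u : V, u ≠ w → T.parent u = w → u ∈ Finset.eraseNone P := by
    intro u hu hp
    rw [Finset.mem_eraseNone]
    refine hleg (some u) (by simpa using hu) ?_
    rw [hparent u]
    have hur : u ≠ T.root := by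
      rintro rfl
      exact hu (by rw [← hp, hrootfix])
    rw [if_neg hur, hp]
  refine ⟨w, ?_, hleg'⟩
  rcases hv with ⟨h1, h2⟩ | ⟨h1, h2⟩
  · refine Or.inl ⟨by simpa [Finset.mem_eraseNone] using h1, ?_⟩
    subst h2
    ext x
    simp [Finset.mem_eraseNone]
  · refine Or.inr ⟨by simpa [Finset.mem_eraseNone] using h1, ?_⟩
    subst h2
    ext x
    simp [Finset.mem_eraseNone]

lemma step_junction
    (hparent : ∀ v : V, T'.parent (some v) = if v = T.root then none else some (T.parent v))
    {P Q : Finset (Option V)} (hP : none ∉ P) (hQ : none ∈ Q) (h : PebStep T' P Q) :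
    Q = insert none P ∧ some T.root ∈ P := by
  obtain ⟨v, hv, hleg⟩ := h
  rcases hv with ⟨h1, h2⟩ | ⟨h1, h2⟩
  · obtain rfl : v = none := by
      subst h2
      rcases Finset.mem_insert.mp hQ with h | h
      · exact h.symm
      · exact absurd h hP
    refine ⟨h2, hleg (some T.root) (by simp) ?_⟩
    rw [hparent T.root, if_pos rfl]
  · exact absurd (h2 ▸ Finset.mem_insert_of_mem hQ) hP

lemma chain_eraseNone
    (hrootfix : T.parent T.root = T.root)
    (hparent : ∀ v : V, T'.parent (some v) = if v = T.root then none else some (T.parent v)) :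
    ∀ S : List (Finset (Option V)), (∀ Q ∈ S, none ∈ Q) → S.Chain' (PebStep T') →
      (S.map Finset.eraseNone).Chain' (PebStep T)
  | [], _, _ => by exact List.isChain_nil
  | [a], _, _ => by exact List.isChain_singleton _
  | a :: b :: t, hmem, hch => by
    unfold List.Chain' at *
    rw [List.map_cons, List.map_cons, List.isChain_cons_cons]
    obtain ⟨hab, hrest⟩ := List.isChain_cons_cons.mp hch
    refine ⟨step_erase hrootfix hparent (hmem a (by simp)) (hmem b (by simp)) hab, ?_⟩
    have := chain_eraseNone hrootfix hparent (b :: t) (fun Q hQ => hmem Q (by simp [hQ])) hrest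
    simpa [List.Chain'] using this

/-- Direction A: a visiting pebbling of `T` with space `≤ k` yields a persistent
pebbling of `T'` with space `≤ k + 1`. -/
lemma dirA
    (hroot : T'.root = none) (hnone : T'.parent none = none)
    (hparent : ∀ v : V, T'.parent (some v) = if v = T.root then none else some (T.parent v))
    {k : ℕ} (hex : ∃ L : List (Finset V), IsVisPebbling T L ∧ pebSpace L ≤ k) :
    ∃ L' : List (Finset (Option V)), IsPebbling T' L' ∧ pebSpace L' ≤ k + 1 := by
  classical
  obtain ⟨L, ⟨h1, h2, ⟨P, hPL, hProot⟩, hch⟩, hsp⟩ := hex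
  obtain ⟨s, t, rfl⟩ := List.mem_iff_append.mp hPL
  set L₁ : List (Finset V) := s ++ [P] with hL₁
  have hL1ne : L₁ ≠ [] := by simp [hL₁]
  have hLeq : s ++ P :: t = L₁ ++ t := by simp [hL₁]
  have hch1 : L₁.Chain' (PebStep T) := hch.prefix ⟨t, hLeq.symm⟩
  have hhead1 : L₁.head? = some ∅ := by
    rw [hLeq, List.head?_append_of_ne_nil _ hL1ne] at h1; exact h1
  have hlast1 : L₁.getLast? = some P := List.getLast?_concat
  set lift : Finset V → Finset (Option V) := fun Q => Q.image some with hlift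
  have hunion : ∀ A : Finset V, A.image some ∪ {none} = insert none (A.image some) := by
    intro A
    rw [Finset.union_comm, ← Finset.insert_eq]
  have stepL : ∀ A B : Finset V, PebStep T A B → PebStep T' (lift A) (lift B) := by
    intro A B hAB
    have := step_lift hnone hparent hAB ∅ (by simp)
    simpa [hlift] using this
  set g : Finset V → Finset (Option V) := fun Q => insert none (lift Q) with hg
  have stepN : ∀ A B : Finset V, PebStep T A B → PebStep T' (g A) (g B) := by
    intro A B hAB
    have := step_lift hnone hparent hAB {none} (by simp)
    rw [hunion A, hunion B] at this
    simpa [hg, hlift] using this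
  set L' := L₁.map lift ++ L₁.reverse.map g with hL'
  have hmapne : L₁.map lift ≠ [] := by simpa using hL1ne
  have hrevne : L₁.reverse.map g ≠ [] := by simpa using hL1ne
  have hhead' : L'.head? = some ∅ := by
    rw [hL', List.head?_append_of_ne_nil _ hmapne, List.head?_map, hhead1]
    simp [hlift]
  have hlast' : L'.getLast? = some {T'.root} := by
    rw [hL', List.getLast?_append_of_ne_nil _ hrevne, List.getLast?_map,
      List.getLast?_reverse, hhead1, hroot]
    simp [hg, hlift]
  have hchain' : L'.Chain' (PebStep T') := by
    rw [hL']
    unfold List.Chain' at *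
    rw [List.isChain_append]
    refine ⟨?_, ?_, ?_⟩
    · rw [List.isChain_map]
      exact hch1.imp fun {a b} hab => stepL a b hab
    · rw [List.isChain_map]
      exact (chain'_peb_reverse hch1).imp fun {a b} hab => stepN a b hab
    · intro x hx y hy
      rw [List.getLast?_map, hlast1] at hx
      rw [List.head?_map, List.head?_reverse, hlast1] at hy
      obtain rfl : lift P = x := by simpa using hx
      obtain rfl : g P = y := by simpa using hy
      refine ⟨none, Or.inl ⟨by simp [hlift], rfl⟩, ?_⟩
      rintro (_ | w) hu hp
      · exact absurd rfl hu
      · rw [hparent w] at hp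
        by_cases hw : w = T.root
        · subst hw
          exact Finset.mem_image_of_mem _ hProot
        · rw [if_neg hw] at hp
          exact absurd hp (by simp)
  have hcard1 : ∀ A : Finset V, A ∈ L₁ → A.card ≤ k := by
    intro A hA
    refine pebSpace_le_iff.mp hsp A ?_
    rw [hLeq]
    exact List.mem_append_left _ hA
  have hspace : pebSpace L' ≤ k + 1 := by
    rw [pebSpace_le_iff]
    intro Q hQ
    rw [hL', List.mem_append] at hQ
    rcases hQ with hQ | hQ
    · obtain ⟨A, hA, rfl⟩ := List.mem_map.mp hQ
      have h3 : (lift A).card = A.card := Finset.card_image_of_injective _ (Option.some_injective V)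
      have h4 := hcard1 A hA
      omega
    · obtain ⟨A, hA, rfl⟩ := List.mem_map.mp hQ
      have h3 : (g A).card ≤ (lift A).card + 1 := Finset.card_insert_le _ _
      have h4 : (lift A).card = A.card := Finset.card_image_of_injective _ (Option.some_injective V)
      have h5 := hcard1 A (List.mem_reverse.mp hA)
      omega
  exact ⟨L', ⟨hhead', hlast', hchain'⟩, hspace⟩

/-- Direction B: a persistent pebbling of `T'` with space `≤ k + 1` yields a
visiting pebbling of `T` with space `≤ k`. -/
lemma dirB
    (hrootfix : T.parent T.root = T.root)
    (hroot : T'.root = none)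
    (hparent : ∀ v : V, T'.parent (some v) = if v = T.root then none else some (T.parent v))
    {k : ℕ} (hex : ∃ L' : List (Finset (Option V)), IsPebbling T' L' ∧ pebSpace L' ≤ k + 1) :
    ∃ L : List (Finset V), IsVisPebbling T L ∧ pebSpace L ≤ k := by
  classical
  obtain ⟨L', ⟨h1, h2, hch⟩, hsp⟩ := hex
  rw [hroot] at h2
  set p : Finset (Option V) → Bool := fun Q => decide (none ∈ Q) with hp
  set R := L'.reverse with hR
  have hRhead : R.head? = some {none} := by rw [hR, List.head?_reverse]; exact h2
  have hRne : R ≠ [] := by intro h0; rw [h0] at hRhead; simp at hRhead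
  have htwdw : R.takeWhile p ++ R.dropWhile p = R := List.takeWhile_append_dropWhile (p := p)
  have htwne : R.takeWhile p ≠ [] := by
    intro h0
    have hdw : R.dropWhile p = R := by
      conv_rhs => rw [← htwdw]
      rw [h0, List.nil_append]
    have hdne : R.dropWhile p ≠ [] := by rw [hdw]; exact hRne
    have hfalse := List.head_dropWhile_not p hdne
    have h5 : some ((R.dropWhile p).head hdne) = some ({none} : Finset (Option V)) := by
      rw [← List.head?_eq_head hdne, hdw, hRhead]
    rw [Option.some.inj h5] at hfalse
    simp [hp] at hfalse
  have hdwne : R.dropWhile p ≠ [] := by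
    intro h0
    have hRtw : R.takeWhile p = R := by
      conv_rhs => rw [← htwdw]
      rw [h0, List.append_nil]
    have hemem : (∅ : Finset (Option V)) ∈ L' := List.mem_of_mem_head? (by simp [h1])
    have hemem' : (∅ : Finset (Option V)) ∈ R.takeWhile p := by
      rw [hRtw, hR, List.mem_reverse]
      exact hemem
    have := List.mem_takeWhile_imp hemem'
    simp [hp] at this
  obtain ⟨P0, rest, hdw⟩ : ∃ a l, R.dropWhile p = a :: l := by
    cases hd : R.dropWhile p with
    | nil => exact absurd hd hdwne
    | cons a l => exact ⟨a, l, rfl⟩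
  have hPn : none ∉ P0 := by
    have hfalse := List.head_dropWhile_not p hdwne
    have h5 : some ((R.dropWhile p).head hdwne) = some P0 := by
      rw [← List.head?_eq_head hdwne, hdw]
      simp
    rw [Option.some.inj h5] at hfalse
    simpa [hp] using hfalse
  set S : List (Finset (Option V)) := (R.takeWhile p).reverse with hSdef
  have hSmem : ∀ Q ∈ S, none ∈ Q := by
    intro Q hQ
    rw [hSdef, List.mem_reverse] at hQ
    have := List.mem_takeWhile_imp hQ
    simpa [hp] using this
  have hL'eq : L' = rest.reverse ++ (P0 :: S) := by
    have hLR : L' = R.reverse := by rw [hR, List.reverse_reverse]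
    rw [hLR]
    conv_lhs => rw [← htwdw]
    rw [hdw, List.reverse_append, List.reverse_cons, hSdef]
    simp [List.append_assoc]
  have hchPS : (P0 :: S).Chain' (PebStep T') := hch.suffix ⟨rest.reverse, hL'eq.symm⟩
  have hSne : S ≠ [] := by simpa [hSdef] using htwne
  obtain ⟨Q0, S2, hS⟩ : ∃ a l, S = a :: l := by
    cases hd : S with
    | nil => exact absurd hd hSne
    | cons a l => exact ⟨a, l, rfl⟩
  have hstep0 : PebStep T' P0 Q0 := by
    rw [hS] at hchPS
    exact (List.isChain_cons_cons.mp hchPS).1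
  have hQ0none : none ∈ Q0 := hSmem Q0 (by rw [hS]; simp)
  obtain ⟨hQ0eq, hProot⟩ := step_junction hparent hPn hQ0none hstep0
  have hchS : S.Chain' (PebStep T') := by
    rw [hS]
    rw [hS] at hchPS
    exact (List.isChain_cons_cons.mp hchPS).2
  have hSlast : S.getLast? = some {none} := by
    have h6 : (R.takeWhile p).head? = some {none} := by
      rw [← List.head?_append_of_ne_nil (R.takeWhile p) (l₂ := R.dropWhile p) htwne, htwdw]
      exact hRhead
    rw [hSdef, List.getLast?_reverse, h6]
  set St : List (Finset V) := S.map Finset.eraseNone with hSt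
  have hchSt : St.Chain' (PebStep T) := chain_eraseNone hrootfix hparent S hSmem hchS
  set X : List (Finset V) := St.reverse with hX
  have hXne : X ≠ [] := by simpa [hX, hSt] using hSne
  have hXchain : X.Chain' (PebStep T) := chain'_peb_reverse hchSt
  have hXhead : X.head? = some ∅ := by
    rw [hX, List.head?_reverse, hSt, List.getLast?_map, hSlast]
    simp [Finset.eraseNone_none]
  obtain ⟨M, hMh, hMl, hMc, hMX, hXM⟩ := bounce T X hXne hXchain
  have hmemL' : ∀ Q' ∈ S, Q' ∈ L' := by
    intro Q' hQ'
    rw [hL'eq]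
    exact List.mem_append_right _ (List.mem_cons_of_mem _ hQ')
  refine ⟨M, ⟨by rw [hMh, hXhead], by rw [hMl, hXhead], ⟨Finset.eraseNone Q0, ?_, ?_⟩, hMc⟩, ?_⟩
  · refine hXM _ ?_
    rw [hX, List.mem_reverse, hSt]
    exact List.mem_map_of_mem (by rw [hS]; simp)
  · rw [Finset.mem_eraseNone, hQ0eq]
    exact Finset.mem_insert_of_mem hProot
  · rw [pebSpace_le_iff]
    intro Q hQ
    have hQX : Q ∈ X := hMX Q hQ
    rw [hX, List.mem_reverse, hSt] at hQX
    obtain ⟨Q', hQ'S, rfl⟩ := List.mem_map.mp hQX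
    have hc1 : Q'.card ≤ k + 1 := pebSpace_le_iff.mp hsp Q' (hmemL' Q' hQ'S)
    have hnQ' : none ∈ Q' := hSmem _ hQ'S
    have himg : (Finset.eraseNone Q').image some = Q'.erase none :=
      Finset.image_some_eraseNone Q'
    have hcard2 : (Q'.erase none).card = (Finset.eraseNone Q').card := by
      rw [← himg, Finset.card_image_of_injective _ (Option.some_injective V)]
    have hcard3 := Finset.card_erase_of_mem hnQ'
    have hpos : 0 < Q'.card := Finset.card_pos.mpr ⟨none, hnQ'⟩
    omega

end Lift

/-- Every rooted directed tree admits some visiting pebbling. -/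
lemma exists_vis {V : Type} [Fintype V] [DecidableEq V] (T : PebSys V) (hT : IsRDTree T) :
    ∃ L : List (Finset V), IsVisPebbling T L := by
  classical
  set h : V → ℕ := fun v => Nat.find (hT.2 v) with hh
  have hheight : ∀ u v : V, u ≠ v → T.parent u = v → h v < h u := by
    intro u v huv hp
    have hu : T.parent^[h u] u = T.root := Nat.find_spec (hT.2 u)
    have hu0 : h u ≠ 0 := by
      intro h0
      rw [h0, Function.iterate_zero_apply] at hu
      apply huv
      rw [hu, ← hp, hu, hT.1]
    obtain ⟨m, hm⟩ := Nat.exists_eq_succ_of_ne_zero hu0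
    rw [hm, Function.iterate_succ_apply, hp] at hu
    have : h v ≤ m := Nat.find_min' (hT.2 v) hu
    omega
  set vs : List V := (Finset.univ : Finset V).toList.mergeSort
      (fun a b => decide (h b ≤ h a)) with hvs
  have hperm : vs.Perm (Finset.univ : Finset V).toList := List.mergeSort_perm _ _
  have hnodup : vs.Nodup := hperm.nodup_iff.mpr (Finset.nodup_toList _)
  have hmem : ∀ v : V, v ∈ vs := fun v =>
    hperm.mem_iff.mpr (Finset.mem_toList.mpr (Finset.mem_univ v))
  have hsort : vs.Pairwise (fun a b => h b ≤ h a) := by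
    have := List.pairwise_mergeSort (le := fun a b : V => decide (h b ≤ h a))
      (fun a b c => by simpa using fun h1 h2 => h2.trans h1)
      (fun a b => by simpa using le_total (h b) (h a))
      (Finset.univ : Finset V).toList
    exact this.imp (by simp)
  set n := vs.length with hn
  set f : ℕ → Finset V := fun i => (vs.take i).toFinset with hf
  have hstep : ∀ i, i < n → PebStep T (f i) (f (i + 1)) := by
    intro i hi
    refine ⟨vs[i], Or.inl ⟨?_, ?_⟩, ?_⟩
    · simp only [hf, List.mem_toFinset]
      intro hmem'
      obtain ⟨j, hj, hje⟩ := List.mem_take_iff_getElem.mp hmem'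
      have : j = i := (hnodup.getElem_inj_iff).mp hje
      omega
    · simp only [hf]
      rw [List.take_succ, List.getElem?_eq_getElem hi]
      ext x
      rw [List.toFinset_append]
      simp [or_comm]
    · intro u hu hp
      obtain ⟨j, hj, hje⟩ := List.mem_iff_getElem.mp (hmem u)
      have hlt : h vs[i] < h u := hheight u vs[i] hu hp
      have hji : j < i := by
        rcases lt_trichotomy j i with hc | rfl | hc
        · exact hc
        · exact absurd hje.symm hu
        · have := List.pairwise_iff_getElem.mp hsort i j hi hj hc
          rw [hje] at this
          omega
      simp only [hf, List.mem_toFinset]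
      rw [List.mem_take_iff_getElem]
      exact ⟨j, by omega, hje⟩
  set X : List (Finset V) := (List.range (n + 1)).map f with hX
  have hXne : X ≠ [] := by simp [hX]
  have hXchain : X.Chain' (PebStep T) := by
    rw [hX]
    unfold List.Chain'
    rw [List.isChain_map]
    exact (List.isChain_range_succ _ n).mpr hstep
  have hXhead : X.head? = some ∅ := by
    rw [hX, List.head?_map, List.head?_range]
    simp [hf]
  obtain ⟨M, hMh, hMl, hMc, _, hXM⟩ := bounce T X hXne hXchain
  refine ⟨M, by rw [hMh, hXhead], by rw [hMl, hXhead], ⟨f n, ?_, ?_⟩, hMc⟩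
  · refine hXM _ ?_
    rw [hX, List.mem_map]
    exact ⟨n, by simp, rfl⟩
  · simp only [hf, hn, List.take_length, List.mem_toFinset]
    exact hmem T.root

/-- Let `T` be a rooted directed tree with root `r`, and let
`T'` be obtained from `T` by adding a new vertex `r'` (encoded as `none` in
`Option V`) together with the directed edge `(r, r')`, with `r'` the new root.
Then for every positive integer `k`, `vrev(T) ≤ k ↔ rev(T') ≤ k + 1`. -/
theorem vrev_le_iff_rev_extended_le {V : Type} [Fintype V] [DecidableEq V]
    (T : PebSys V) (hT : IsRDTree T)
    (T' : PebSys (Option V))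
    (hroot : T'.root = none)
    (hnone : T'.parent none = none)
    (hparent : ∀ v : V,
      T'.parent (some v) = if v = T.root then none else some (T.parent v))
    (k : ℕ) (hk : 0 < k) :
    vrevNum T ≤ k ↔ revNum T' ≤ k + 1 := by
  obtain ⟨L₀, hL₀⟩ := exists_vis T hT
  have hAne : {m | ∃ L : List (Finset V), IsVisPebbling T L ∧ pebSpace L ≤ m}.Nonempty :=
    ⟨pebSpace L₀, L₀, hL₀, le_refl _⟩
  have hBne : {m | ∃ L : List (Finset (Option V)), IsPebbling T' L ∧ pebSpace L ≤ m}.Nonempty := by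
    obtain ⟨L', hL', hsp'⟩ := dirA hroot hnone hparent ⟨L₀, hL₀, le_refl _⟩
    exact ⟨pebSpace L₀ + 1, L', hL', hsp'⟩
  constructor
  · intro hle
    obtain ⟨L, hvis, hsp⟩ := Nat.sInf_mem hAne
    have hsp' : pebSpace L ≤ k := hsp.trans hle
    obtain ⟨L', hpeb, hsp''⟩ := dirA hroot hnone hparent ⟨L, hvis, hsp'⟩
    exact Nat.sInf_le ⟨L', hpeb, hsp''⟩
  · intro hle
    obtain ⟨L', hpeb, hsp⟩ := Nat.sInf_mem hBne
    have hsp' : pebSpace L' ≤ k + 1 := hsp.trans hle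
    obtain ⟨L, hvis, hsp''⟩ := dirB hT.1 hroot hparent ⟨L', hpeb, hsp'⟩
    exact Nat.sInf_le ⟨L, hvis, hsp''⟩
end

section
/- For every integer h ≥ 2, the persistent reversible pebbling number of the complete binary tree of height h is at least one more than that of the complete binary tree of height h − 1: rev(Bt_h) ≥ rev(Bt_{h−1}) + 1. -/
/-- The complete binary tree of height `h` (every root-to-leaf path has `h`
nodes), on the `2 ^ h - 1` vertices `0, …, 2 ^ h - 2` in heap order: the root
is `0` and the parent of vertex `i > 0` is `(i - 1) / 2`; all edges are
directed toward the root. -/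
def BtSys (h : ℕ) (hpos : 0 < 2 ^ h - 1) : PebSys (Fin (2 ^ h - 1)) where
  root := ⟨0, hpos⟩
  parent := fun i =>
    ⟨(i.val - 1) / 2, lt_of_le_of_lt (le_trans (Nat.div_le_self _ _) (Nat.sub_le _ _)) i.isLt⟩

section Generic

set_option linter.unusedSectionVars false
variable {V : Type} [DecidableEq V] {T : PebSys V}

/-- A step allowing stutters. -/
def StepE (T : PebSys V) (P Q : Finset V) : Prop := P = Q ∨ PebStep T P Q

theorem pebStep_symm {P Q : Finset V} (h : PebStep T P Q) : PebStep T Q P := by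
  obtain ⟨v, hmv, hg⟩ := h
  refine ⟨v, ?_, ?_⟩
  · tauto
  · intro u hu hp
    have := hg u hu hp
    rcases hmv with ⟨hv, rfl⟩ | ⟨hv, h2⟩
    · exact Finset.mem_insert_of_mem this
    · rw [h2] at this
      rcases Finset.mem_insert.1 this with h | h
      · exact absurd h hu
      · exact h

theorem stepE_symm {P Q : Finset V} (h : StepE T P Q) : StepE T Q P := by
  rcases h with h | h
  · exact Or.inl h.symm
  · exact Or.inr (pebStep_symm h)

theorem stepE_insert (w : V) {P Q : Finset V} (h : StepE T P Q) :
    StepE T (insert w P) (insert w Q) := by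
  rcases h with rfl | ⟨v, hmv, hg⟩
  · exact Or.inl rfl
  by_cases hvw : v = w
  · subst hvw
    left
    rcases hmv with ⟨hv, rfl⟩ | ⟨hv, rfl⟩ <;> simp [Finset.insert_idem]
  · right
    refine ⟨v, ?_, fun u hu hp => Finset.mem_insert_of_mem (hg u hu hp)⟩
    rcases hmv with ⟨hv, rfl⟩ | ⟨hv, rfl⟩
    · exact Or.inl ⟨by simp [hvw, hv], (Finset.insert_comm _ _ _)⟩
    · exact Or.inr ⟨by simp [hvw, hv], (Finset.insert_comm _ _ _)⟩

theorem pebStep_sdiff {P Q S : Finset V} (v : V)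
    (hmv : (v ∉ P ∧ Q = insert v P) ∨ (v ∉ Q ∧ P = insert v Q))
    (hg : ∀ u : V, u ≠ v → T.parent u = v → u ∈ P)
    (hvS : v ∉ S) (hgS : ∀ u : V, u ≠ v → T.parent u = v → u ∉ S) :
    PebStep T (P \ S) (Q \ S) := by
  refine ⟨v, ?_, fun u hu hp => Finset.mem_sdiff.2 ⟨hg u hu hp, hgS u hu hp⟩⟩
  rcases hmv with ⟨hv, rfl⟩ | ⟨hv, rfl⟩
  · exact Or.inl ⟨by simp [hv], Finset.insert_sdiff_of_notMem _ hvS⟩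
  · exact Or.inr ⟨by simp [hv], Finset.insert_sdiff_of_notMem _ hvS⟩

theorem card_le_pebSpace {P : Finset V} {L : List (Finset V)} (h : P ∈ L) :
    P.card ≤ pebSpace L := by
  induction L with
  | nil => simp at h
  | cons a l ih =>
    rcases List.mem_cons.1 h with rfl | h
    · exact le_max_left _ _ |>.trans (le_of_eq rfl)
    · exact (ih h).trans (le_max_right _ _)

theorem pebSpace_le {L : List (Finset V)} {B : ℕ} (h : ∀ P ∈ L, P.card ≤ B) :
    pebSpace L ≤ B := by
  induction L with
  | nil => simp [pebSpace]
  | cons a l ih =>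
    have : pebSpace (a :: l) = max a.card (pebSpace l) := rfl
    rw [this]
    exact max_le (h a (by simp)) (ih fun P hP => h P (List.mem_cons_of_mem _ hP))

/-- Destuttering: from a chain of `StepE` get a chain of `PebStep` with the
same endpoints, whose members all come from the original list. -/
theorem destutter_chain : ∀ (L : List (Finset V)), L.Chain' (StepE T) → L ≠ [] →
    ∃ L' : List (Finset V), L'.Chain' (PebStep T) ∧ L'.head? = L.head? ∧
      L'.getLast? = L.getLast? ∧ ∀ P ∈ L', P ∈ L := by
  intro L
  induction L with
  | nil => intro _ h; exact absurd rfl h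
  | cons a l ih =>
    intro hch _
    cases l with
    | nil => exact ⟨[a], List.isChain_singleton a, rfl, rfl, by simp⟩
    | cons b t =>
      have hch' : (b :: t).Chain' (StepE T) := hch.tail
      obtain ⟨L', hL'c, hh, hl, hmem⟩ := ih hch' (by simp)
      have hab : StepE T a b := (List.isChain_cons_cons.1 hch).1
      rcases hab with rfl | hab
      · refine ⟨L', hL'c, ?_, by simpa using hl, fun P hP => List.mem_cons_of_mem _ (hmem P hP)⟩
        simpa using hh
      · refine ⟨a :: L', ?_, rfl, ?_, ?_⟩
        · simp only [List.Chain', List.isChain_cons]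
          refine ⟨?_, hL'c⟩
          intro y hy
          have : L'.head? = some b := by simpa using hh
          rw [this] at hy
          cases hy
          exact hab
        · rw [List.getLast?_cons, hl]
          simp [List.getLast?_cons]
        · intro P hP
          rcases List.mem_cons.1 hP with rfl | hP
          · exact List.mem_cons_self
          · exact List.mem_cons_of_mem _ (hmem P hP)

end Generic
section Abstract

set_option linter.unusedSectionVars false

variable {V V' : Type} [DecidableEq V] [DecidableEq V'] [Fintype V']

/-- Projection of a configuration along an embedding. -/
def projF (ι : V' → V) (A : Finset V) : Finset V' :=
  Finset.univ.filter (fun y => ι y ∈ A)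

@[simp] theorem mem_projF {ι : V' → V} {A : Finset V} {y : V'} :
    y ∈ projF ι A ↔ ι y ∈ A := by simp [projF]

@[simp] theorem projF_empty (ι : V' → V) : projF ι (∅ : Finset V) = ∅ := by
  ext y; simp

theorem card_projF_le {ι : V' → V} (hι : Function.Injective ι) (A : Finset V) :
    (projF ι A).card ≤ A.card := by
  have h1 : (projF ι A).image ι ⊆ A := by
    intro x hx
    obtain ⟨y, hy, rfl⟩ := Finset.mem_image.1 hx
    exact mem_projF.1 hy
  calc (projF ι A).card = ((projF ι A).image ι).card :=
        (Finset.card_image_of_injective _ hι).symm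
    _ ≤ A.card := Finset.card_le_card h1

theorem card_projF_add_le {ι₁ ι₂ : V' → V} (h1 : Function.Injective ι₁)
    (h2 : Function.Injective ι₂) (hd : ∀ x y, ι₁ x ≠ ι₂ y) (A : Finset V) :
    (projF ι₁ A).card + (projF ι₂ A).card ≤ A.card := by
  have hsub : (projF ι₁ A).image ι₁ ∪ (projF ι₂ A).image ι₂ ⊆ A := by
    intro x hx
    rcases Finset.mem_union.1 hx with hx | hx <;>
      · obtain ⟨y, hy, rfl⟩ := Finset.mem_image.1 hx
        exact mem_projF.1 hy
  have hdisj : Disjoint ((projF ι₁ A).image ι₁) ((projF ι₂ A).image ι₂) := by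
    rw [Finset.disjoint_left]
    intro a ha hb
    obtain ⟨y, _, rfl⟩ := Finset.mem_image.1 ha
    obtain ⟨z, _, hz⟩ := Finset.mem_image.1 hb
    exact hd y z hz.symm
  calc (projF ι₁ A).card + (projF ι₂ A).card
      = ((projF ι₁ A).image ι₁ ∪ (projF ι₂ A).image ι₂).card := by
        rw [Finset.card_union_of_disjoint hdisj,
          Finset.card_image_of_injective _ h1, Finset.card_image_of_injective _ h2]
    _ ≤ A.card := Finset.card_le_card hsub

/-- An embedding of a subtree (rooted at a child of the root). -/
structure GoodEmb (T : PebSys V) (T' : PebSys V') (ι : V' → V) : Prop where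
  inj : Function.Injective ι
  root_img : T.parent (ι T'.root) = T.root
  img_ne_root : ∀ x, ι x ≠ T.root
  comm : ∀ x, x ≠ T'.root → ι (T'.parent x) = T.parent (ι x)

theorem projF_stepE {T : PebSys V} {T' : PebSys V'} {ι : V' → V}
    (hG : GoodEmb T T' ι) (hroot' : T'.parent T'.root = T'.root)
    {A B : Finset V} (h : StepE T A B) :
    StepE T' (projF ι A) (projF ι B) := by
  rcases h with rfl | ⟨v, hmv, hg⟩
  · exact Or.inl rfl
  by_cases hv : ∃ y, ι y = v
  · obtain ⟨y, rfl⟩ := hv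
    right
    refine ⟨y, ?_, ?_⟩
    · rcases hmv with ⟨hvA, rfl⟩ | ⟨hvB, rfl⟩
      · refine Or.inl ⟨by simp [hvA], ?_⟩
        ext z
        simp only [mem_projF, Finset.mem_insert, hG.inj.eq_iff]
      · refine Or.inr ⟨by simp [hvB], ?_⟩
        ext z
        simp only [mem_projF, Finset.mem_insert, hG.inj.eq_iff]
    · intro u hu hp
      have hune : u ≠ T'.root := by
        rintro rfl
        exact hu (hp ▸ hroot'.symm)
      have hpar : T.parent (ι u) = ι y := by rw [← hG.comm u hune, hp]
      have hne : ι u ≠ ι y := fun e => hu (hG.inj e)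
      exact mem_projF.2 (hg _ hne hpar)
  · left
    push_neg at hv
    ext z
    simp only [mem_projF]
    rcases hmv with ⟨hvA, rfl⟩ | ⟨hvB, rfl⟩
    · simp [Finset.mem_insert, hv z]
    · simp [Finset.mem_insert, hv z]

/-- The one-sided construction: given a stuttering chain in the big tree, going
from a configuration whose subtree part is empty to a configuration containing
the subtree root, with suitable space bounds, build a persistent pebbling chain
of the subtree. -/
theorem side_construction {T : PebSys V} {T' : PebSys V'} {ι : V' → V}
    (hG : GoodEmb T T' ι) (hroot' : T'.parent T'.root = T'.root)
    (s N₁ : ℕ) (Q : ℕ → Finset V)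
    (hstep : ∀ i < N₁, StepE T (Q i) (Q (i + 1)))
    (hcard : ∀ i ≤ N₁, (Q i).card + 1 ≤ s)
    (hc0 : T'.root ∈ projF ι (Q 0))
    (M : ℕ) (hM : M ≤ N₁)
    (hMempty : projF ι (Q M) = ∅)
    (hgood : ∀ i ≤ M, T'.root ∉ projF ι (Q i) → (projF ι (Q i)).card + 2 ≤ s) :
    ∃ (N' : ℕ) (G : ℕ → Finset V'), G 0 = ∅ ∧ G N' = {T'.root} ∧
      (∀ i < N', StepE T' (G i) (G (i + 1))) ∧ ∀ i ≤ N', (G i).card + 1 ≤ s := by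
  set X : ℕ → Finset V' := fun i => projF ι (Q i) with hX
  have hc0' : T'.root ∈ X 0 := hc0
  have hMempty' : X M = ∅ := hMempty
  have hgood' : ∀ i ≤ M, T'.root ∉ X i → (X i).card + 2 ≤ s := hgood
  have hM1 : 1 ≤ M := by
    rcases Nat.eq_zero_or_pos M with rfl | h
    · rw [hMempty] at hc0; simp at hc0
    · exact h
  have hXstep : ∀ i < M, StepE T' (X i) (X (i + 1)) := fun i hi =>
    projF_stepE hG hroot' (hstep i (lt_of_lt_of_le hi hM))
  have hXcard : ∀ i ≤ M, (X i).card + 1 ≤ s := fun i hi =>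
    le_trans (Nat.add_le_add_right (card_projF_le hG.inj _) 1) (hcard i (le_trans hi hM))
  refine ⟨2 * M, fun j => if j ≤ M then X (M - j) else insert T'.root (X (j - M)),
    ?_, ?_, ?_, ?_⟩
  · simp [hMempty']
  · have : ¬ (2 * M ≤ M) := by omega
    simp only [this, if_false]
    have h2 : 2 * M - M = M := by omega
    rw [h2, hMempty']
    simp
  · intro i hi
    by_cases h1 : i + 1 ≤ M
    · have h0 : i ≤ M := le_trans (Nat.le_succ i) h1
      simp only [h0, h1, if_true]
      have : M - i = (M - (i+1)) + 1 := by omega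
      rw [this]
      exact stepE_symm (hXstep _ (by omega))
    · -- i + 1 > M
      by_cases h0 : i ≤ M
      · -- i = M
        have hiM : i = M := by omega
        simp only [h0, if_true, h1, if_false]
        have e1 : M - i = 0 := by omega
        have e2 : i + 1 - M = 1 := by omega
        rw [e1, e2]
        have hself : insert T'.root (X 0) = X 0 := Finset.insert_eq_self.2 hc0'
        rw [← hself]
        exact stepE_insert _ (hXstep 0 (by omega))
      · simp only [h0, h1, if_false]
        have : i + 1 - M = (i - M) + 1 := by omega
        rw [this]
        exact stepE_insert _ (hXstep (i - M) (by omega))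
  · intro i hi
    by_cases h0 : i ≤ M
    · simp only [h0, if_true]
      exact hXcard _ (by omega)
    · simp only [h0, if_false]
      have him : i - M ≤ M := by omega
      by_cases hr : T'.root ∈ X (i - M)
      · rw [Finset.insert_eq_self.2 hr]
        exact hXcard _ him
      · have := hgood' (i - M) him hr
        have hle := Finset.card_insert_le T'.root (X (i - M))
        omega

end Abstract
section Reduce

set_option linter.unusedSectionVars false

variable {V V' : Type} [DecidableEq V] [DecidableEq V'] [Fintype V']

theorem reduce (T : PebSys V) (T' : PebSys V')
    (hrootT : T.parent T.root = T.root) (hroot' : T'.parent T'.root = T'.root)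
    (ι₁ ι₂ : V' → V) (h₁ : GoodEmb T T' ι₁) (h₂ : GoodEmb T T' ι₂)
    (hdisj : ∀ x y, ι₁ x ≠ ι₂ y)
    (s N : ℕ) (P : ℕ → Finset V) (hP0 : P 0 = ∅) (hPN : P N = {T.root})
    (hstep : ∀ i < N, PebStep T (P i) (P (i + 1)))
    (hcard : ∀ i ≤ N, (P i).card ≤ s) :
    ∃ (N' : ℕ) (G : ℕ → Finset V'), G 0 = ∅ ∧ G N' = {T'.root} ∧
      (∀ i < N', StepE T' (G i) (G (i + 1))) ∧ ∀ i ≤ N', (G i).card + 1 ≤ s := by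
  classical
  set r := T.root with hr
  set c := ι₁ T'.root with hc
  set d := ι₂ T'.root with hd
  -- the last time the root is absent
  set t := Nat.findGreatest (fun i => r ∉ P i) N with ht
  have hrt : r ∉ P t := by
    have : r ∉ P 0 := by simp [hP0]
    exact Nat.findGreatest_spec (P := fun i => r ∉ P i) (Nat.zero_le N) this
  have htN : t ≤ N := Nat.findGreatest_le N
  have hafter : ∀ j, t < j → j ≤ N → r ∈ P j := by
    intro j h1 h2
    by_contra hmem
    exact Nat.findGreatest_is_greatest h1 h2 hmem
  have htltN : t < N := by
    rcases Nat.lt_or_ge t N with h | h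
    · exact h
    · exfalso
      have : t = N := le_antisymm htN h
      rw [this, hPN] at hrt
      simp at hrt
  -- the step at time t places the root, so both children are pebbled
  obtain ⟨v, hmv, hgd⟩ := hstep t htltN
  have hrt1 : r ∈ P (t + 1) := hafter (t + 1) (Nat.lt_succ_self t) (by omega)
  have hvr : v = r ∧ P (t + 1) = insert r (P t) := by
    rcases hmv with ⟨hv, he⟩ | ⟨hv, he⟩
    · by_cases hvv : v = r
      · subst hvv; exact ⟨rfl, he⟩
      · exfalso
        rw [he] at hrt1
        rcases Finset.mem_insert.1 hrt1 with h | h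
        · exact hvv h.symm
        · exact hrt h
    · exfalso
      have : r ∈ P t := by
        rw [he]
        exact Finset.mem_insert_of_mem hrt1
      exact hrt this
  have hcPt : c ∈ P t := hgd c (by rw [hvr.1]; exact h₁.img_ne_root _) (by rw [hvr.1]; exact h₁.root_img)
  have hdPt : d ∈ P t := hgd d (by rw [hvr.1]; exact h₂.img_ne_root _) (by rw [hvr.1]; exact h₂.root_img)
  have hcd : c ≠ d := hdisj _ _
  -- the chain after time t, with the root removed
  set N₁ := N - t with hN₁
  have hN₁pos : 1 ≤ N₁ := by omega
  set Q : ℕ → Finset V := fun i => (P (t + i)).erase r with hQ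
  have hQstep : ∀ i < N₁, StepE T (Q i) (Q (i + 1)) := by
    intro i hi
    rcases Nat.eq_zero_or_pos i with rfl | hipos
    · left
      show (P (t + 0)).erase r = (P (t + 1)).erase r
      rw [Nat.add_zero, hvr.2, Finset.erase_insert hrt, Finset.erase_eq_of_notMem hrt]
    · right
      have hi1 : t + i ≤ N := by omega
      have hi2 : t + i + 1 ≤ N := by omega
      have hri : r ∈ P (t + i) := hafter _ (by omega) hi1
      have hri1 : r ∈ P (t + i + 1) := hafter _ (by omega) hi2
      obtain ⟨w, hmw, hgw⟩ := hstep (t + i) (by omega)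
      have hwr : w ≠ r := by
        rintro rfl
        rcases hmw with ⟨hw, _⟩ | ⟨hw, _⟩
        · exact hw hri
        · exact hw hri1
      have e1 : Q i = P (t+i) \ {r} := Finset.erase_eq _ _
      have e2 : Q (i+1) = P (t+i+1) \ {r} := by
        rw [hQ]
        simp only []
        rw [show t + (i+1) = t + i + 1 by omega, Finset.erase_eq]
      rw [e1, e2]
      exact pebStep_sdiff w hmw hgw (by simp [hwr])
        (fun u hu hp hmem => by
          have : u = r := Finset.mem_singleton.1 hmem
          subst this
          rw [hrootT] at hp
          exact hwr hp.symm)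
  have hQeq : ∀ i, Q i = (P (t + i)) \ {r} := fun i => Finset.erase_eq _ _
  have hQcard : ∀ i ≤ N₁, (Q i).card + 1 ≤ s := by
    intro i hi
    rcases Nat.eq_zero_or_pos i with rfl | hipos
    · have h1 : (P (t + 1)).card = (P t).card + 1 := by
        rw [hvr.2]
        exact Finset.card_insert_of_notMem hrt
      have h2 : (Q 0).card ≤ (P t).card := by
        rw [hQ]
        simpa using Finset.card_erase_le
      have := hcard (t + 1) (by omega)
      omega
    · have hri : r ∈ P (t + i) := hafter _ (by omega) (by omega)
      have h1 : (Q i).card = (P (t + i)).card - 1 := by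
        rw [hQ]
        simpa using Finset.card_erase_of_mem hri
      have h2 : 1 ≤ (P (t + i)).card := Finset.card_pos.2 ⟨r, hri⟩
      have := hcard (t + i) (by omega)
      omega
  have hQN₁ : Q N₁ = ∅ := by
    rw [hQ]
    simp only []
    rw [show t + N₁ = N by omega, hPN]
    simp
  have hcQ0 : c ∈ Q 0 := by
    rw [hQ]
    simp only [Nat.add_zero]
    exact Finset.mem_erase.2 ⟨h₁.img_ne_root _, hcPt⟩
  have hdQ0 : d ∈ Q 0 := by
    rw [hQ]
    simp only [Nat.add_zero]
    exact Finset.mem_erase.2 ⟨h₂.img_ne_root _, hdPt⟩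
  have hs3 : 3 ≤ s := by
    have h2 : ({c, d} : Finset V) ⊆ Q 0 := by
      intro x hx
      rcases Finset.mem_insert.1 hx with rfl | hx
      · exact hcQ0
      · rw [Finset.mem_singleton.1 hx]; exact hdQ0
    have h3 : ({c, d} : Finset V).card = 2 := Finset.card_pair hcd
    have h4 := Finset.card_le_card h2
    have := hQcard 0 (by omega)
    omega
  -- badness of a configuration w.r.t. a subtree
  have key : ∀ (ι : V' → V), GoodEmb T T' ι → T'.root ∈ projF ι (Q 0) →
      ∀ M ≤ N₁, projF ι (Q M) = ∅ →
      (∀ i ≤ M, T'.root ∉ projF ι (Q i) → (projF ι (Q i)).card + 2 ≤ s) →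
      ∃ (N' : ℕ) (G : ℕ → Finset V'), G 0 = ∅ ∧ G N' = {T'.root} ∧
        (∀ i < N', StepE T' (G i) (G (i + 1))) ∧ ∀ i ≤ N', (G i).card + 1 ≤ s := by
    intro ι hG hc0 M hM hMe hMg
    exact side_construction hG hroot' s N₁ Q hQstep hQcard hc0 M hM hMe hMg
  set bad : (V' → V) → ℕ → Prop := fun ι i => s ≤ (projF ι (Q i)).card + 1 ∧ T'.root ∉ projF ι (Q i)
    with hbad
  have hnotbad : ∀ ι i, ¬ bad ι i → T'.root ∉ projF ι (Q i) → (projF ι (Q i)).card + 2 ≤ s := by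
    intro ι i hb hroot
    have h5 : ¬ s ≤ (projF ι (Q i)).card + 1 := fun hle => hb ⟨hle, hroot⟩
    omega
  have hoverlap : ∀ i ≤ N₁, ¬ (bad ι₁ i ∧ bad ι₂ i) := by
    rintro i hi ⟨⟨hb1, _⟩, ⟨hb2, _⟩⟩
    have hsum := card_projF_add_le h₁.inj h₂.inj hdisj (Q i)
    have := hQcard i hi
    omega
  by_cases hb₁ : ∃ i, i ≤ N₁ ∧ bad ι₁ i
  · by_cases hb₂ : ∃ i, i ≤ N₁ ∧ bad ι₂ i
    · -- both kinds of bad configurations occur; use the one occurring later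
      have hex₁ : ∃ i, i ≤ N₁ ∧ bad ι₁ i := hb₁
      have hex₂ : ∃ i, i ≤ N₁ ∧ bad ι₂ i := hb₂
      have hspec₁ := Nat.find_spec hex₁
      have hspec₂ := Nat.find_spec hex₂
      set j₁ := Nat.find hex₁ with hj₁
      set j₂ := Nat.find hex₂ with hj₂
      obtain ⟨hj₁N, hbadj₁⟩ := hspec₁
      obtain ⟨hj₂N, hbadj₂⟩ := hspec₂
      have hne : j₁ ≠ j₂ := by
        rintro he
        exact hoverlap j₁ hj₁N ⟨hbadj₁, he ▸ hbadj₂⟩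
      rcases Nat.lt_or_ge j₂ j₁ with hlt | hge
      · -- use subtree 1 with M := j₂
        refine key ι₁ h₁ (by simpa using hcQ0) j₂ hj₂N ?_ ?_
        · have hsum := card_projF_add_le h₁.inj h₂.inj hdisj (Q j₂)
          have h5 := hQcard j₂ hj₂N
          have h6 := hbadj₂.1
          have : (projF ι₁ (Q j₂)).card = 0 := by omega
          exact Finset.card_eq_zero.1 this
        · intro i hi hroot
          have : ¬ (i ≤ N₁ ∧ bad ι₁ i) := Nat.find_min hex₁ (by omega)
          push_neg at this
          exact hnotbad ι₁ i (this (by omega)) hroot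
      · have hlt : j₁ < j₂ := by omega
        refine key ι₂ h₂ (by simpa using hdQ0) j₁ hj₁N ?_ ?_
        · have hsum := card_projF_add_le h₁.inj h₂.inj hdisj (Q j₁)
          have h5 := hQcard j₁ hj₁N
          have h6 := hbadj₁.1
          have : (projF ι₂ (Q j₁)).card = 0 := by omega
          exact Finset.card_eq_zero.1 this
        · intro i hi hroot
          have : ¬ (i ≤ N₁ ∧ bad ι₂ i) := Nat.find_min hex₂ (by omega)
          push_neg at this
          exact hnotbad ι₂ i (this (by omega)) hroot
    · -- no bad configuration for subtree 2
      push_neg at hb₂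
      refine key ι₂ h₂ (by simpa using hdQ0) N₁ le_rfl (by rw [hQN₁]; simp) ?_
      intro i hi hroot
      exact hnotbad ι₂ i (hb₂ i hi) hroot
  · -- no bad configuration for subtree 1
    push_neg at hb₁
    refine key ι₁ h₁ (by simpa using hcQ0) N₁ le_rfl (by rw [hQN₁]; simp) ?_
    intro i hi hroot
    exact hnotbad ι₁ i (hb₁ i hi) hroot

end Reduce
section Convert

variable {V : Type} [DecidableEq V]

theorem exists_pebbling_of_fn (T : PebSys V) (N : ℕ) (G : ℕ → Finset V)
    (h0 : G 0 = ∅) (hN : G N = {T.root}) (hst : ∀ i < N, StepE T (G i) (G (i + 1)))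
    (B : ℕ) (hc : ∀ i ≤ N, (G i).card ≤ B) :
    ∃ L, IsPebbling T L ∧ pebSpace L ≤ B := by
  set L0 := (List.range (N + 1)).map G with hL0
  have hch : L0.Chain' (StepE T) := by
    simp only [hL0, List.Chain', List.isChain_map]
    exact (List.isChain_range_succ _ N).2 (fun m hm => hst m hm)
  have hne : L0 ≠ [] := by
    intro h
    apply_fun List.length at h
    simp [hL0] at h
  have hhead : L0.head? = some (G 0) := by
    rw [hL0, List.range_succ_eq_map]
    rfl
  have hlast : L0.getLast? = some (G N) := by
    rw [hL0, List.range_succ, List.map_append]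
    simp
  obtain ⟨L', hch', hh, hl, hmem⟩ := destutter_chain L0 hch hne
  refine ⟨L', ⟨by rw [hh, hhead, h0], by rw [hl, hlast, hN], hch'⟩, ?_⟩
  apply pebSpace_le
  intro Pc hPc
  have hin := hmem Pc hPc
  rw [hL0] at hin
  obtain ⟨i, hi, rfl⟩ := List.mem_map.1 hin
  exact hc i (Nat.lt_succ_iff.1 (List.mem_range.1 hi))

theorem fn_of_pebbling (T : PebSys V) (L : List (Finset V)) (h : IsPebbling T L) :
    ∃ (N : ℕ) (P : ℕ → Finset V), P 0 = ∅ ∧ P N = {T.root} ∧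
      (∀ i < N, PebStep T (P i) (P (i + 1))) ∧ ∀ i ≤ N, (P i).card ≤ pebSpace L := by
  obtain ⟨hh, hl, hch⟩ := h
  have hne : L ≠ [] := by
    intro e
    rw [e] at hh
    simp at hh
  have hlen : 0 < L.length := List.length_pos_iff.2 hne
  refine ⟨L.length - 1, fun i => L.getD i ∅, ?_, ?_, ?_, ?_⟩
  · obtain ⟨a, l, rfl⟩ := List.exists_cons_of_ne_nil hne
    simp only [List.head?_cons, Option.some_inj] at hh
    simpa using hh
  · show L.getD (L.length - 1) ∅ = {T.root}
    have h1 : L.getD (L.length - 1) ∅ = L.getLast hne := by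
      rw [List.getLast_eq_getElem, List.getD_eq_getElem _ _ (by omega)]
    rw [h1]
    rw [List.getLast?_eq_getLast hne, Option.some_inj] at hl
    exact hl
  · intro i hi
    show PebStep T (L.getD i ∅) (L.getD (i+1) ∅)
    have := List.isChain_iff_getElem.1 hch i (by omega)
    rw [List.getD_eq_getElem _ _ (by omega), List.getD_eq_getElem _ _ (by omega)]
    simpa [List.get_eq_getElem] using this
  · intro i hi
    show (L.getD i ∅).card ≤ pebSpace L
    by_cases hilen : i < L.length
    · apply card_le_pebSpace
      rw [List.getD_eq_getElem _ _ hilen]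
      exact List.getElem_mem _
    · omega

end Convert
section Exists

/-- Bt has at least one persistent pebbling: pebble all vertices bottom-up,
then remove all non-root vertices top-down. -/
theorem heap_exists_pebbling (n : ℕ) (hpos : 0 < n) (T : PebSys (Fin n))
    (hroot : T.root = ⟨0, hpos⟩)
    (hpar : ∀ v : Fin n, (T.parent v).val = (v.val - 1) / 2) :
    ∃ L, IsPebbling T L := by
  set G : ℕ → Finset (Fin n) := fun i =>
    if i ≤ n then Finset.univ.filter (fun v => n - i ≤ v.val)
    else insert ⟨0, hpos⟩ (Finset.univ.filter (fun v => i - n < v.val)) with hG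
  have hGle : ∀ i, i ≤ n → G i = Finset.univ.filter (fun v => n - i ≤ v.val) := by
    intro i hi
    rw [hG]
    simp only [hi, if_true]
  have hGgt : ∀ i, ¬ (i ≤ n) →
      G i = insert ⟨0, hpos⟩ (Finset.univ.filter (fun v => i - n < v.val)) := by
    intro i hi
    rw [hG]
    simp only [hi, if_false]
  have hG0 : G 0 = ∅ := by
    rw [hGle 0 (by omega)]
    ext v
    simp only [Finset.mem_filter, Finset.mem_univ, true_and, Finset.notMem_empty, iff_false]
    have := v.isLt
    omega
  have hGN : G (2 * n - 1) = {T.root} := by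
    by_cases hn1 : n = 1
    · subst hn1
      rw [hGle 1 (by omega)]
      ext v
      have := v.isLt
      simp only [Finset.mem_filter, Finset.mem_univ, true_and, hroot,
        Finset.mem_singleton, Fin.ext_iff]
      omega
    rw [hGgt (2 * n - 1) (by omega)]
    have h3 : Finset.univ.filter (fun v : Fin n => 2 * n - 1 - n < v.val) = ∅ := by
      ext v
      simp only [Finset.mem_filter, Finset.mem_univ, true_and, Finset.notMem_empty, iff_false]
      have := v.isLt
      omega
    rw [h3, hroot]
    rfl
  have hstep : ∀ i < 2 * n - 1, StepE T (G i) (G (i + 1)) := by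
    intro i hi
    right
    by_cases h1 : i + 1 ≤ n
    · -- insertion of vertex n - i - 1
      refine ⟨⟨n - i - 1, by omega⟩, Or.inl ⟨?_, ?_⟩, ?_⟩
      · rw [hGle i (by omega)]
        simp only [Finset.mem_filter, Finset.mem_univ, true_and]
        omega
      · rw [hGle _ h1, hGle i (by omega)]
        ext v
        simp only [Finset.mem_filter, Finset.mem_univ, true_and, Finset.mem_insert, Fin.ext_iff]
        have := v.isLt
        omega
      · intro u hu hp
        rw [hGle i (by omega)]
        simp only [Finset.mem_filter, Finset.mem_univ, true_and]
        have hp' : (u.val - 1) / 2 = n - i - 1 := by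
          have := congrArg Fin.val hp
          rwa [hpar] at this
        have hu' : u.val ≠ n - i - 1 := fun e => hu (Fin.ext e)
        omega
    · -- removal of vertex (i - n) + 1
      refine ⟨⟨i - n + 1, by omega⟩, Or.inr ⟨?_, ?_⟩, ?_⟩
      · rw [hGgt (i+1) (by omega)]
        simp only [Finset.mem_insert, Finset.mem_filter, Finset.mem_univ, true_and,
          Fin.ext_iff]
        push_neg
        exact ⟨by omega, by omega⟩
      · by_cases h2 : i ≤ n
        · rw [hGle i h2, hGgt (i+1) (by omega)]
          ext v
          simp only [Finset.mem_filter, Finset.mem_univ, true_and, Finset.mem_insert,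
            Fin.ext_iff]
          have := v.isLt
          omega
        · rw [hGgt i h2, hGgt (i+1) (by omega)]
          ext v
          simp only [Finset.mem_insert, Finset.mem_filter, Finset.mem_univ, true_and,
            Fin.ext_iff]
          have := v.isLt
          omega
      · intro u hu hp
        have hp' : (u.val - 1) / 2 = i - n + 1 := by
          have := congrArg Fin.val hp
          rwa [hpar] at this
        have hu2 : 2 * (i - n + 1) + 1 ≤ u.val := by omega
        by_cases h2 : i ≤ n
        · rw [hGle i h2]
          simp only [Finset.mem_filter, Finset.mem_univ, true_and]
          omega
        · rw [hGgt i h2]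
          simp only [Finset.mem_insert, Finset.mem_filter, Finset.mem_univ, true_and]
          right
          omega
  obtain ⟨L, hL, _⟩ := exists_pebbling_of_fn T (2 * n - 1) G hG0 hGN hstep n
    (fun i _ => le_trans (Finset.card_le_univ _) (by simp))
  exact ⟨L, hL⟩

theorem bt_exists_pebbling (h : ℕ) (hpos : 0 < 2 ^ h - 1) :
    ∃ L, IsPebbling (BtSys h hpos) L :=
  heap_exists_pebbling _ hpos (BtSys h hpos) rfl (fun _ => rfl)

end Exists
section BtEmb

/-- Heap-order embedding of the left subtree (0-based vertex labels). -/
def e1 (w : ℕ) : ℕ := w + 2 ^ Nat.log 2 (w + 1)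

/-- Heap-order embedding of the right subtree (0-based vertex labels). -/
def e2 (w : ℕ) : ℕ := w + 2 ^ (Nat.log 2 (w + 1) + 1)

theorem log_bounds (w : ℕ) :
    2 ^ Nat.log 2 (w + 1) ≤ w + 1 ∧ w + 1 < 2 * 2 ^ Nat.log 2 (w + 1) := by
  constructor
  · exact Nat.pow_log_le_self 2 (by omega)
  · have := Nat.lt_pow_succ_log_self (b := 2) (by norm_num) (w + 1)
    rwa [pow_succ, mul_comm] at this

theorem e1_strictMono : StrictMono e1 := by
  intro w u hwu
  have h1 : Nat.log 2 (w + 1) ≤ Nat.log 2 (u + 1) := Nat.log_mono_right (by omega)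
  have h2 : 2 ^ Nat.log 2 (w + 1) ≤ 2 ^ Nat.log 2 (u + 1) :=
    Nat.pow_le_pow_right (by norm_num) h1
  unfold e1
  omega

theorem e2_strictMono : StrictMono e2 := by
  intro w u hwu
  have h1 : Nat.log 2 (w + 1) ≤ Nat.log 2 (u + 1) := Nat.log_mono_right (by omega)
  have h2 : 2 ^ (Nat.log 2 (w + 1) + 1) ≤ 2 ^ (Nat.log 2 (u + 1) + 1) :=
    Nat.pow_le_pow_right (by norm_num) (by omega)
  unfold e2
  omega

theorem e1_comm (w : ℕ) (hw : 1 ≤ w) : e1 ((w - 1) / 2) = (e1 w - 1) / 2 := by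
  have hl1 : 1 ≤ Nat.log 2 (w + 1) :=
    (Nat.le_log_iff_pow_le (by norm_num) (by omega)).2 (by simpa using (by omega : 2 ≤ w + 1))
  have hdiv : (w - 1) / 2 + 1 = (w + 1) / 2 := by omega
  have hlog : Nat.log 2 ((w - 1) / 2 + 1) = Nat.log 2 (w + 1) - 1 := by
    rw [hdiv, Nat.log_div_base]
  have hpow : 2 ^ Nat.log 2 (w + 1) = 2 * 2 ^ (Nat.log 2 (w + 1) - 1) := by
    rw [← pow_succ']
    congr 1
    omega
  unfold e1
  rw [hlog]
  omega

theorem e2_comm (w : ℕ) (hw : 1 ≤ w) : e2 ((w - 1) / 2) = (e2 w - 1) / 2 := by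
  have hl1 : 1 ≤ Nat.log 2 (w + 1) :=
    (Nat.le_log_iff_pow_le (by norm_num) (by omega)).2 (by simpa using (by omega : 2 ≤ w + 1))
  have hdiv : (w - 1) / 2 + 1 = (w + 1) / 2 := by omega
  have hlog : Nat.log 2 ((w - 1) / 2 + 1) = Nat.log 2 (w + 1) - 1 := by
    rw [hdiv, Nat.log_div_base]
  have hpow : 2 ^ (Nat.log 2 (w + 1) + 1) = 2 * 2 ^ Nat.log 2 (w + 1) := by
    rw [← pow_succ']
  have hpow2 : 2 ^ (Nat.log 2 (w + 1) - 1 + 1) = 2 ^ Nat.log 2 (w + 1) := by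
    congr 1
    omega
  unfold e2
  rw [hlog, hpow2]
  omega

theorem e1_ne_e2 (w u : ℕ) : e1 w ≠ e2 u := by
  intro he
  have hw := log_bounds w
  have hu := log_bounds u
  unfold e1 e2 at he
  have hp2 : 2 ^ (Nat.log 2 (u + 1) + 1) = 2 * 2 ^ Nat.log 2 (u + 1) := by
    rw [← pow_succ']
  rw [hp2] at he
  rcases lt_trichotomy (Nat.log 2 (w + 1)) (Nat.log 2 (u + 1)) with hab | hab | hab
  · have : 2 * 2 ^ Nat.log 2 (w + 1) ≤ 2 ^ Nat.log 2 (u + 1) := by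
      calc 2 * 2 ^ Nat.log 2 (w + 1) = 2 ^ (Nat.log 2 (w + 1) + 1) := by rw [← pow_succ']
        _ ≤ 2 ^ Nat.log 2 (u + 1) := Nat.pow_le_pow_right (by norm_num) (by omega)
    omega
  · rw [hab] at he hw
    omega
  · have : 2 * 2 ^ Nat.log 2 (u + 1) ≤ 2 ^ Nat.log 2 (w + 1) := by
      calc 2 * 2 ^ Nat.log 2 (u + 1) = 2 ^ (Nat.log 2 (u + 1) + 1) := by rw [← pow_succ']
        _ ≤ 2 ^ Nat.log 2 (w + 1) := Nat.pow_le_pow_right (by norm_num) (by omega)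
    omega

theorem e_bounds (h w : ℕ) (hh : 2 ≤ h) (hw : w < 2 ^ (h - 1) - 1) :
    e1 w < 2 ^ h - 1 ∧ e2 w < 2 ^ h - 1 := by
  have hbb := log_bounds w
  have hlog : Nat.log 2 (w + 1) < h - 1 := by
    apply Nat.log_lt_of_lt_pow (by omega)
    have h1 : 1 ≤ 2 ^ (h - 1) := Nat.one_le_two_pow
    omega
  have hA : 2 ^ Nat.log 2 (w + 1) ≤ 2 ^ (h - 2) :=
    Nat.pow_le_pow_right (by norm_num) (by omega)
  have h4 : 2 ^ h = 4 * 2 ^ (h - 2) := by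
    calc 2 ^ h = 2 ^ (h - 2 + 2) := by congr 1; omega
      _ = 4 * 2 ^ (h - 2) := by rw [pow_add]; ring
  have hP : 1 ≤ 2 ^ (h - 2) := Nat.one_le_two_pow
  unfold e1 e2
  have hp2 : 2 ^ (Nat.log 2 (w + 1) + 1) = 2 * 2 ^ Nat.log 2 (w + 1) := by
    rw [← pow_succ']
  rw [hp2]
  omega

theorem e1_pos (w : ℕ) : 1 ≤ e1 w := by
  have : 1 ≤ 2 ^ Nat.log 2 (w + 1) := Nat.one_le_two_pow
  unfold e1
  omega

theorem e2_pos (w : ℕ) : 1 ≤ e2 w := by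
  have : 1 ≤ 2 ^ (Nat.log 2 (w + 1) + 1) := Nat.one_le_two_pow
  unfold e2
  omega

theorem e1_zero : e1 0 = 1 := by
  unfold e1
  norm_num

theorem e2_zero : e2 0 = 2 := by
  unfold e2
  norm_num

end BtEmb

section Assemble

theorem bt_reduce (h : ℕ) (hh : 2 ≤ h) (hpos : 0 < 2 ^ h - 1) (hpos' : 0 < 2 ^ (h - 1) - 1)
    (L : List (Finset (Fin (2 ^ h - 1)))) (hL : IsPebbling (BtSys h hpos) L) :
    ∃ L', IsPebbling (BtSys (h - 1) hpos') L' ∧ pebSpace L' + 1 ≤ pebSpace L := by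
  set T := BtSys h hpos with hT
  set T' := BtSys (h - 1) hpos' with hT'
  set ι₁ : Fin (2 ^ (h - 1) - 1) → Fin (2 ^ h - 1) :=
    fun x => ⟨e1 x.val, (e_bounds h x.val hh x.isLt).1⟩ with hι₁
  set ι₂ : Fin (2 ^ (h - 1) - 1) → Fin (2 ^ h - 1) :=
    fun x => ⟨e2 x.val, (e_bounds h x.val hh x.isLt).2⟩ with hι₂
  have hrootT : T.parent T.root = T.root := by
    apply Fin.ext
    show ((0 : ℕ) - 1) / 2 = 0
    omega
  have hroot' : T'.parent T'.root = T'.root := by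
    apply Fin.ext
    show ((0 : ℕ) - 1) / 2 = 0
    omega
  have hroot'0 : (T'.root : Fin (2 ^ (h - 1) - 1)).val = 0 := rfl
  have hg₁ : GoodEmb T T' ι₁ := by
    refine ⟨?_, ?_, ?_, ?_⟩
    · intro x y he
      apply Fin.ext
      exact e1_strictMono.injective (congrArg Fin.val he)
    · apply Fin.ext
      show (e1 0 - 1) / 2 = 0
      rw [e1_zero]
    · intro x he
      have h0 : e1 x.val = 0 := congrArg Fin.val he
      have := e1_pos x.val
      omega
    · intro x hx
      have hx0 : 1 ≤ x.val := by
        rcases Nat.eq_zero_or_pos x.val with h0 | h0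
        · exact absurd (Fin.ext h0) hx
        · exact h0
      apply Fin.ext
      show e1 ((x.val - 1) / 2) = (e1 x.val - 1) / 2
      exact e1_comm x.val hx0
  have hg₂ : GoodEmb T T' ι₂ := by
    refine ⟨?_, ?_, ?_, ?_⟩
    · intro x y he
      apply Fin.ext
      exact e2_strictMono.injective (congrArg Fin.val he)
    · apply Fin.ext
      show (e2 0 - 1) / 2 = 0
      rw [e2_zero]
    · intro x he
      have h0 : e2 x.val = 0 := congrArg Fin.val he
      have := e2_pos x.val
      omega
    · intro x hx
      have hx0 : 1 ≤ x.val := by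
        rcases Nat.eq_zero_or_pos x.val with h0 | h0
        · exact absurd (Fin.ext h0) hx
        · exact h0
      apply Fin.ext
      show e2 ((x.val - 1) / 2) = (e2 x.val - 1) / 2
      exact e2_comm x.val hx0
  have hdisj : ∀ x y, ι₁ x ≠ ι₂ y := by
    intro x y he
    exact e1_ne_e2 x.val y.val (congrArg Fin.val he)
  obtain ⟨N, P, hP0, hPN, hstep, hcard⟩ := fn_of_pebbling T L hL
  obtain ⟨N', G, hG0, hGN', hGstep, hGcard⟩ :=
    reduce T T' hrootT hroot' ι₁ ι₂ hg₁ hg₂ hdisj (pebSpace L) N P hP0 hPN hstep hcard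
  have hs1 : 1 ≤ pebSpace L := by
    have hmem : ({T.root} : Finset (Fin (2 ^ h - 1))) ∈ L := by
      have := hL.2.1
      exact List.mem_of_mem_getLast? this
    have := card_le_pebSpace hmem
    simpa using this
  obtain ⟨L', hL', hsp'⟩ := exists_pebbling_of_fn T' N' G hG0 hGN' hGstep (pebSpace L - 1)
    (fun i hi => by have := hGcard i hi; omega)
  exact ⟨L', hL', by omega⟩

end Assemble

/-- For every integer `h ≥ 2`,
`rev(Bt_h) ≥ rev(Bt_{h-1}) + 1`. -/
theorem rev_bt_ge_rev_bt_pred_add_one (h : ℕ) (hh : 2 ≤ h) :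
    revNum (BtSys (h - 1)
        (by have : 1 < 2 ^ (h - 1) := Nat.one_lt_two_pow_iff.mpr (by omega); omega)) + 1 ≤
      revNum (BtSys h
        (by have : 1 < 2 ^ h := Nat.one_lt_two_pow_iff.mpr (by omega); omega)) := by
  set hpos' : 0 < 2 ^ (h - 1) - 1 :=
    (by have : 1 < 2 ^ (h - 1) := Nat.one_lt_two_pow_iff.mpr (by omega); omega)
  set hpos : 0 < 2 ^ h - 1 :=
    (by have : 1 < 2 ^ h := Nat.one_lt_two_pow_iff.mpr (by omega); omega)
  set T := BtSys h hpos with hT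
  set T' := BtSys (h - 1) hpos' with hT'
  set S : Set ℕ := {k | ∃ L, IsPebbling T L ∧ pebSpace L ≤ k} with hS
  have hSne : S.Nonempty := by
    obtain ⟨L, hL⟩ := bt_exists_pebbling h hpos
    exact ⟨pebSpace L, L, hL, le_rfl⟩
  have hrev : revNum T = sInf S := rfl
  have hmem : sInf S ∈ S := Nat.sInf_mem hSne
  obtain ⟨L, hL, hsp⟩ := hmem
  obtain ⟨L', hL', hlt⟩ := bt_reduce h hh hpos hpos' L hL
  have hrev' : revNum T' ≤ pebSpace L' :=
    Nat.sInf_le ⟨L', hL', le_rfl⟩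
  rw [hrev]
  omega
end
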